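/- The number of pairs of partitions (ν, μ) with ν = (ν₀, ν₁, …, ν_s), μ = (μ₁, …, μ_s), |ν| + |μ| = n, and ν_i ≤ μ_i for all 1 ≤ i ≤ s, equals p₂(n) − p₂(n−2). -/

import Mathlib

/-- A partition encoded as a weakly decreasing function `ℕ → ℕ` with finitely many
nonzero parts (zero-padded). -/
def IsPartitionFun (f : ℕ → ℕ) : Prop :=
  Antitone f ∧ ∃ N, ∀ i, N ≤ i → f i = 0

/-- `p₂ m` = number of pairs of partitions of total size `m`. -/
noncomputable def numPartitionPairs (m : ℕ) : ℕ :=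
  Nat.card {p : (ℕ → ℕ) × (ℕ → ℕ) //
    IsPartitionFun p.1 ∧ IsPartitionFun p.2 ∧
      (∑ᶠ i, p.1 i) + (∑ᶠ i, p.2 i) = m}

namespace PP6


lemma finsum_eq_range (f : ℕ → ℕ) {N : ℕ} (hN : ∀ i, N ≤ i → f i = 0) :
    ∑ᶠ i, f i = ∑ i ∈ Finset.range N, f i := by
  apply finsum_eq_sum_of_support_subset
  intro i hi
  simp only [Function.mem_support] at hi
  simp only [Finset.coe_range, Set.mem_Iio]
  by_contra h
  exact hi (hN i (le_of_not_gt h))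
lemma partial_le_finsum (f : ℕ → ℕ) {N : ℕ} (hN : ∀ i, N ≤ i → f i = 0) (k : ℕ) :
    ∑ i ∈ Finset.range k, f i ≤ ∑ᶠ i, f i := by
  have h2 : ∀ i, max N k ≤ i → f i = 0 := fun i hi => hN i (le_trans (le_max_left _ _) hi)
  rw [finsum_eq_range f h2]
  exact Finset.sum_le_sum_of_subset (Finset.range_subset_range.2 (le_max_right _ _))

/-- each value is at most the total -/
lemma value_le_finsum {f : ℕ → ℕ} (hp : IsPartitionFun f) (i : ℕ) :
    f i ≤ ∑ᶠ j, f j := by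
  obtain ⟨N, hN⟩ := hp.2
  calc f i ≤ ∑ j ∈ Finset.range (i+1), f j := by
        apply Finset.single_le_sum (f := f) (fun _ _ => Nat.zero_le _)
        simp
    _ ≤ _ := partial_le_finsum f hN _

/-- beyond the total, values vanish -/
lemma zero_of_ge_finsum {f : ℕ → ℕ} (hp : IsPartitionFun f) {s i : ℕ}
    (hs : ∑ᶠ j, f j = s) (hi : s ≤ i) : f i = 0 := by
  obtain ⟨N, hN⟩ := hp.2
  by_contra h
  have h1 : 1 ≤ f i := Nat.one_le_iff_ne_zero.2 h
  have key : (i+1) * 1 ≤ ∑ j ∈ Finset.range (i+1), f j := by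
    calc (i+1) * 1 = ∑ _j ∈ Finset.range (i+1), 1 := by simp [mul_comm]
      _ ≤ _ := Finset.sum_le_sum (fun j hj => le_trans h1 (hp.1 (by
          simp only [Finset.mem_range] at hj; omega)))
  have := partial_le_finsum f hN (i+1)
  omega

def Sprop (n : ℕ) (p : (ℕ → ℕ) × (ℕ → ℕ)) : Prop :=
  IsPartitionFun p.1 ∧ IsPartitionFun p.2 ∧ (∑ᶠ i, p.1 i) + (∑ᶠ i, p.2 i) = n

lemma finite_aux (n : ℕ) (Q : (ℕ → ℕ) × (ℕ → ℕ) → Prop) :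
    Finite {p : (ℕ → ℕ) × (ℕ → ℕ) // Sprop n p ∧ Q p} := by
  have key : Finite {p : (ℕ → ℕ) × (ℕ → ℕ) // Sprop n p} := by
    apply Finite.of_injective (β := (Fin (n+1) → Fin (n+1)) × (Fin (n+1) → Fin (n+1)))
      (f := fun x => (fun i => ⟨x.val.1 i, by
          have h1 := value_le_finsum x.2.1 i
          have := x.2.2.2; omega⟩,
        fun i => ⟨x.val.2 i, by
          have h1 := value_le_finsum x.2.2.1 i
          have := x.2.2.2; omega⟩))
    intro x y hxy
    have hx := x.2.2.2
    have hy := y.2.2.2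
    simp only [Prod.mk.injEq] at hxy
    apply Subtype.ext
    have e1 : x.val.1 = y.val.1 := by
      funext i
      by_cases hi : i < n + 1
      · exact congrArg Fin.val (congrFun hxy.1 ⟨i, hi⟩)
      · rw [zero_of_ge_finsum x.2.1 rfl (by omega), zero_of_ge_finsum y.2.1 rfl (by omega)]
    have e2 : x.val.2 = y.val.2 := by
      funext i
      by_cases hi : i < n + 1
      · exact congrArg Fin.val (congrFun hxy.2 ⟨i, hi⟩)
      · rw [zero_of_ge_finsum x.2.2.1 rfl (by omega), zero_of_ge_finsum y.2.2.1 rfl (by omega)]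
    exact Prod.ext e1 e2
  apply Finite.of_injective (β := {p // Sprop n p}) (fun x => ⟨x.val, x.2.1⟩)
  intro a b hab
  simp only [Subtype.mk.injEq] at hab
  exact Subtype.ext hab



def phiF (p : (ℕ → ℕ) × (ℕ → ℕ)) (k : ℕ) : (ℕ → ℕ) × (ℕ → ℕ) :=
  (fun i => if i ≤ k + 1 then p.1 i - 1 else p.2 (i - 2),
   fun i => if i + 2 ≤ k + 1 then p.2 i + 1 else p.1 (i + 2))

def psiF (p : (ℕ → ℕ) × (ℕ → ℕ)) (k : ℕ) : (ℕ → ℕ) × (ℕ → ℕ) :=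
  (fun i => if i ≤ k + 1 then p.1 i + 1 else p.2 (i - 2),
   fun i => if i + 2 ≤ k + 1 then p.2 i - 1 else p.1 (i + 2))

section Phi

variable {f g : ℕ → ℕ} {k : ℕ}
  (hf : Antitone f) (hg : Antitone g)
  (hv : g k < f (k + 1)) (hmin : ∀ i, i < k → f (i + 1) ≤ g i)

include hf hv in
lemma hpos : ∀ i, i ≤ k + 1 → 1 ≤ f i := by
  intro i hi
  have h1 : 1 ≤ f (k+1) := by omega
  exact le_trans h1 (hf hi)

include hf hg hv in
lemma phi1_antitone : Antitone (phiF (f, g) k).1 := by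
  apply antitone_nat_of_succ_le
  intro i
  simp only [phiF]
  rcases le_or_gt (i+1) (k+1) with h | h
  · rw [if_pos h, if_pos (by omega)]
    exact Nat.sub_le_sub_right (hf (by omega)) 1
  · rw [if_neg (by omega)]
    rcases eq_or_lt_of_le (show k + 2 ≤ i + 1 by omega) with h2 | h2
    · rw [if_pos (by omega)]
      have : i + 1 - 2 = k := by omega
      rw [this]
      have : i = k + 1 := by omega
      rw [this]
      omega
    · rw [if_neg (by omega)]
      exact hg (by omega)

include hf hg hmin in
lemma phi2_antitone : Antitone (phiF (f, g) k).2 := by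
  apply antitone_nat_of_succ_le
  intro i
  simp only [phiF]
  rcases le_or_gt (i+1+2) (k+1) with h | h
  · rw [if_pos h, if_pos (by omega)]
    exact Nat.add_le_add_right (hg (by omega)) 1
  · rw [if_neg (by omega)]
    rcases le_or_gt (i+2) (k+1) with h2 | h2
    · rw [if_pos h2]
      -- i + 2 = k + 1, i.e. i = k - 1 and k ≥ 1
      have hik : i + 1 = k := by omega
      have h3 : f (i + 1) ≤ g i := hmin i (by omega)
      have h4 : f (i + 1 + 2) ≤ f (i + 1) := hf (by omega)
      omega
    · rw [if_neg (by omega : ¬ (i + 2 ≤ k + 1))]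
      exact hf (by omega)

lemma phi1_zero {Ng : ℕ} (hNg : ∀ i, Ng ≤ i → g i = 0) :
    ∀ i, Ng + k + 3 ≤ i → (phiF (f, g) k).1 i = 0 := by
  intro i hi
  simp only [phiF]
  rw [if_neg (by omega)]
  exact hNg _ (by omega)

lemma phi2_zero {Nf : ℕ} (hNf : ∀ i, Nf ≤ i → f i = 0) :
    ∀ i, Nf + k + 3 ≤ i → (phiF (f, g) k).2 i = 0 := by
  intro i hi
  simp only [phiF]
  rw [if_neg (by omega)]
  exact hNf _ (by omega)


include hf hv in
lemma phi_sum {Nf Ng : ℕ} (hNf : ∀ i, Nf ≤ i → f i = 0) (hNg : ∀ i, Ng ≤ i → g i = 0) :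
    (∑ᶠ i, (phiF (f, g) k).1 i) + (∑ᶠ i, (phiF (f, g) k).2 i) + 2
      = (∑ᶠ i, f i) + (∑ᶠ i, g i) := by
  set M := Nf + Ng + k + 5 with hM
  have e1 : ∑ᶠ i, (phiF (f, g) k).1 i = ∑ i ∈ Finset.range M, (phiF (f, g) k).1 i :=
    finsum_eq_range _ (fun i hi => phi1_zero hNg i (by omega))
  have e2 : ∑ᶠ i, (phiF (f, g) k).2 i = ∑ i ∈ Finset.range M, (phiF (f, g) k).2 i :=
    finsum_eq_range _ (fun i hi => phi2_zero hNf i (by omega))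
  have e3 : ∑ᶠ i, f i = ∑ i ∈ Finset.range (M+2), f i :=
    finsum_eq_range _ (fun i hi => hNf i (by omega))
  have e4 : ∑ᶠ i, g i = ∑ i ∈ Finset.range (M-2), g i :=
    finsum_eq_range _ (fun i hi => hNg i (by omega))
  have s1 : ∑ i ∈ Finset.range M, (phiF (f, g) k).1 i
      = (∑ i ∈ Finset.range (k+2), (f i - 1)) + ∑ i ∈ Finset.Ico (k+2) M, g (i-2) := by
    rw [Finset.range_eq_Ico,
      ← Finset.sum_Ico_consecutive _ (Nat.zero_le (k+2)) (by omega : k+2 ≤ M)]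
    congr 1
    · rw [← Finset.range_eq_Ico]
      apply Finset.sum_congr rfl
      intro i hi
      simp only [Finset.mem_range] at hi
      simp only [phiF]
      rw [if_pos (by omega)]
    · apply Finset.sum_congr rfl
      intro i hi
      simp only [Finset.mem_Ico] at hi
      simp only [phiF]
      rw [if_neg (by omega)]
  have s2 : (∑ i ∈ Finset.range (k+2), (f i - 1)) + (k+2) = ∑ i ∈ Finset.range (k+2), f i := by
    have h : ∑ i ∈ Finset.range (k+2), f i = ∑ i ∈ Finset.range (k+2), ((f i - 1) + 1) := by
      apply Finset.sum_congr rfl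
      intro i hi
      simp only [Finset.mem_range] at hi
      have := hpos hf hv i (by omega)
      omega
    rw [h, Finset.sum_add_distrib]
    simp
  have s3 : ∑ i ∈ Finset.Ico (k+2) M, g (i-2) = ∑ i ∈ Finset.Ico k (M-2), g i := by
    rw [Finset.sum_Ico_eq_sum_range, Finset.sum_Ico_eq_sum_range]
    have hMk : M - 2 - k = M - (k+2) := by omega
    rw [hMk]
    apply Finset.sum_congr rfl
    intro i hi
    congr 1
    omega
  have s4 : (∑ i ∈ Finset.range k, g i) + (∑ i ∈ Finset.Ico k (M-2), g i)
      = ∑ i ∈ Finset.range (M-2), g i := by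
    simp only [Finset.range_eq_Ico]
    exact Finset.sum_Ico_consecutive _ (Nat.zero_le k) (by omega : k ≤ M - 2)
  have s5 : ∑ i ∈ Finset.range M, (phiF (f, g) k).2 i
      = (∑ i ∈ Finset.range k, (g i + 1)) + ∑ i ∈ Finset.Ico k M, f (i+2) := by
    rw [Finset.range_eq_Ico,
      ← Finset.sum_Ico_consecutive _ (Nat.zero_le k) (by omega : k ≤ M)]
    congr 1
    · rw [← Finset.range_eq_Ico]
      apply Finset.sum_congr rfl
      intro i hi
      simp only [Finset.mem_range] at hi
      simp only [phiF]
      rw [if_pos (by omega)]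
    · apply Finset.sum_congr rfl
      intro i hi
      simp only [Finset.mem_Ico] at hi
      simp only [phiF]
      rw [if_neg (by omega)]
  have s6 : ∑ i ∈ Finset.range k, (g i + 1) = (∑ i ∈ Finset.range k, g i) + k := by
    rw [Finset.sum_add_distrib]
    simp
  have s7 : ∑ i ∈ Finset.Ico k M, f (i+2) = ∑ i ∈ Finset.Ico (k+2) (M+2), f i := by
    rw [Finset.sum_Ico_eq_sum_range, Finset.sum_Ico_eq_sum_range]
    have hMk : M + 2 - (k + 2) = M - k := by omega
    rw [hMk]
    apply Finset.sum_congr rfl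
    intro i hi
    congr 1
    omega
  have s8 : (∑ i ∈ Finset.range (k+2), f i) + (∑ i ∈ Finset.Ico (k+2) (M+2), f i)
      = ∑ i ∈ Finset.range (M+2), f i := by
    simp only [Finset.range_eq_Ico]
    exact Finset.sum_Ico_consecutive _ (Nat.zero_le (k+2)) (by omega : k + 2 ≤ M + 2)
  rw [e1, e2, e3, e4]
  omega

include hf hv hmin in
lemma phi_detect :
    ((phiF (f, g) k).2 k ≤ (phiF (f, g) k).1 (k+1) + 1)
    ∧ ∀ i, i < k → ¬ ((phiF (f, g) k).2 i ≤ (phiF (f, g) k).1 (i+1) + 1) := by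
  constructor
  · simp only [phiF]
    rw [if_neg (by omega), if_pos (le_refl _)]
    have h1 := hpos hf hv (k+1) (le_refl _)
    have h2 : f (k+2) ≤ f (k+1) := hf (by omega)
    omega
  · intro i hi
    simp only [phiF]
    rw [if_pos (by omega), if_pos (by omega)]
    have h1 := hpos hf hv (i+1) (by omega)
    have h2 := hmin i hi
    omega

include hf hv in
lemma psi_phi_id : psiF (phiF (f, g) k) k = (f, g) := by
  have hp := hpos hf hv
  simp only [psiF, phiF]
  apply Prod.ext
  · funext i
    simp only
    rcases le_or_gt i (k+1) with h | h
    · rw [if_pos h, if_pos h]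
      have := hp i h
      omega
    · rw [if_neg (by omega), if_neg (by omega : ¬ (i - 2 + 2 ≤ k + 1))]
      congr 1
      omega
  · funext i
    simp only
    rcases le_or_gt (i+2) (k+1) with h | h
    · rw [if_pos h, if_pos h]
      omega
    · rw [if_neg (by omega), if_neg (by omega : ¬ (i + 2 ≤ k + 1))]
      congr 1

end Phi

section Psi

variable {F G : ℕ → ℕ} {k : ℕ}
  (hF : Antitone F) (hG : Antitone G)
  (hr1 : G k ≤ F (k + 1) + 1) (hr2 : ∀ i, i < k → F (i + 1) + 2 ≤ G i)

include hr2 in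
lemma hGpos : ∀ i, i < k → 1 ≤ G i := by
  intro i hi
  have := hr2 i hi
  omega

include hF hG hr1 in
lemma psi1_antitone : Antitone (psiF (F, G) k).1 := by
  apply antitone_nat_of_succ_le
  intro i
  simp only [psiF]
  rcases le_or_gt (i+1) (k+1) with h | h
  · rw [if_pos h, if_pos (by omega)]
    exact Nat.add_le_add_right (hF (by omega)) 1
  · rw [if_neg (by omega)]
    rcases eq_or_lt_of_le (show k + 2 ≤ i + 1 by omega) with h2 | h2
    · rw [if_pos (by omega)]
      have e : i + 1 - 2 = k := by omega
      rw [e]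
      have e2 : i = k + 1 := by omega
      rw [e2]
      exact hr1
    · rw [if_neg (by omega)]
      exact hG (by omega)

include hF hG hr2 in
lemma psi2_antitone : Antitone (psiF (F, G) k).2 := by
  apply antitone_nat_of_succ_le
  intro i
  simp only [psiF]
  rcases le_or_gt (i+1+2) (k+1) with h | h
  · rw [if_pos h, if_pos (by omega)]
    exact Nat.sub_le_sub_right (hG (by omega)) 1
  · rw [if_neg (by omega)]
    rcases le_or_gt (i+2) (k+1) with h2 | h2
    · rw [if_pos h2]
      have h3 : F (i + 1) + 2 ≤ G i := hr2 i (by omega)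
      have h4 : F (i + 1 + 2) ≤ F (i + 1) := hF (by omega)
      omega
    · rw [if_neg (by omega : ¬ (i + 2 ≤ k + 1))]
      exact hF (by omega)

lemma psi1_zero {Ng : ℕ} (hNg : ∀ i, Ng ≤ i → G i = 0) :
    ∀ i, Ng + k + 3 ≤ i → (psiF (F, G) k).1 i = 0 := by
  intro i hi
  simp only [psiF]
  rw [if_neg (by omega)]
  exact hNg _ (by omega)

lemma psi2_zero {Nf : ℕ} (hNf : ∀ i, Nf ≤ i → F i = 0) :
    ∀ i, Nf + k + 3 ≤ i → (psiF (F, G) k).2 i = 0 := by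
  intro i hi
  simp only [psiF]
  rw [if_neg (by omega)]
  exact hNf _ (by omega)

include hr2 in
lemma psi_sum {Nf Ng : ℕ} (hNf : ∀ i, Nf ≤ i → F i = 0) (hNg : ∀ i, Ng ≤ i → G i = 0) :
    (∑ᶠ i, (psiF (F, G) k).1 i) + (∑ᶠ i, (psiF (F, G) k).2 i)
      = (∑ᶠ i, F i) + (∑ᶠ i, G i) + 2 := by
  set M := Nf + Ng + k + 5 with hM
  have e1 : ∑ᶠ i, (psiF (F, G) k).1 i = ∑ i ∈ Finset.range M, (psiF (F, G) k).1 i :=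
    finsum_eq_range _ (fun i hi => psi1_zero hNg i (by omega))
  have e2 : ∑ᶠ i, (psiF (F, G) k).2 i = ∑ i ∈ Finset.range M, (psiF (F, G) k).2 i :=
    finsum_eq_range _ (fun i hi => psi2_zero hNf i (by omega))
  have e3 : ∑ᶠ i, F i = ∑ i ∈ Finset.range (M+2), F i :=
    finsum_eq_range _ (fun i hi => hNf i (by omega))
  have e4 : ∑ᶠ i, G i = ∑ i ∈ Finset.range (M-2), G i :=
    finsum_eq_range _ (fun i hi => hNg i (by omega))
  have s1 : ∑ i ∈ Finset.range M, (psiF (F, G) k).1 i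
      = (∑ i ∈ Finset.range (k+2), (F i + 1)) + ∑ i ∈ Finset.Ico (k+2) M, G (i-2) := by
    rw [Finset.range_eq_Ico,
      ← Finset.sum_Ico_consecutive _ (Nat.zero_le (k+2)) (by omega : k+2 ≤ M)]
    congr 1
    · rw [← Finset.range_eq_Ico]
      apply Finset.sum_congr rfl
      intro i hi
      simp only [Finset.mem_range] at hi
      simp only [psiF]
      rw [if_pos (by omega)]
    · apply Finset.sum_congr rfl
      intro i hi
      simp only [Finset.mem_Ico] at hi
      simp only [psiF]
      rw [if_neg (by omega)]
  have s2 : ∑ i ∈ Finset.range (k+2), (F i + 1) = (∑ i ∈ Finset.range (k+2), F i) + (k+2) := by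
    rw [Finset.sum_add_distrib]
    simp
  have s3 : ∑ i ∈ Finset.Ico (k+2) M, G (i-2) = ∑ i ∈ Finset.Ico k (M-2), G i := by
    rw [Finset.sum_Ico_eq_sum_range, Finset.sum_Ico_eq_sum_range]
    have hMk : M - 2 - k = M - (k+2) := by omega
    rw [hMk]
    apply Finset.sum_congr rfl
    intro i hi
    congr 1
    omega
  have s4 : (∑ i ∈ Finset.range k, G i) + (∑ i ∈ Finset.Ico k (M-2), G i)
      = ∑ i ∈ Finset.range (M-2), G i := by
    simp only [Finset.range_eq_Ico]
    exact Finset.sum_Ico_consecutive _ (Nat.zero_le k) (by omega : k ≤ M - 2)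
  have s5 : ∑ i ∈ Finset.range M, (psiF (F, G) k).2 i
      = (∑ i ∈ Finset.range k, (G i - 1)) + ∑ i ∈ Finset.Ico k M, F (i+2) := by
    rw [Finset.range_eq_Ico,
      ← Finset.sum_Ico_consecutive _ (Nat.zero_le k) (by omega : k ≤ M)]
    congr 1
    · rw [← Finset.range_eq_Ico]
      apply Finset.sum_congr rfl
      intro i hi
      simp only [Finset.mem_range] at hi
      simp only [psiF]
      rw [if_pos (by omega)]
    · apply Finset.sum_congr rfl
      intro i hi
      simp only [Finset.mem_Ico] at hi
      simp only [psiF]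
      rw [if_neg (by omega)]
  have s6 : (∑ i ∈ Finset.range k, (G i - 1)) + k = ∑ i ∈ Finset.range k, G i := by
    have h : ∑ i ∈ Finset.range k, G i = ∑ i ∈ Finset.range k, ((G i - 1) + 1) := by
      apply Finset.sum_congr rfl
      intro i hi
      simp only [Finset.mem_range] at hi
      have := hGpos hr2 i hi
      omega
    rw [h, Finset.sum_add_distrib]
    simp
  have s7 : ∑ i ∈ Finset.Ico k M, F (i+2) = ∑ i ∈ Finset.Ico (k+2) (M+2), F i := by
    rw [Finset.sum_Ico_eq_sum_range, Finset.sum_Ico_eq_sum_range]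
    have hMk : M + 2 - (k + 2) = M - k := by omega
    rw [hMk]
    apply Finset.sum_congr rfl
    intro i hi
    congr 1
    omega
  have s8 : (∑ i ∈ Finset.range (k+2), F i) + (∑ i ∈ Finset.Ico (k+2) (M+2), F i)
      = ∑ i ∈ Finset.range (M+2), F i := by
    simp only [Finset.range_eq_Ico]
    exact Finset.sum_Ico_consecutive _ (Nat.zero_le (k+2)) (by omega : k + 2 ≤ M + 2)
  rw [e1, e2, e3, e4]
  omega

include hF in
lemma psi_bad : (psiF (F, G) k).2 k < (psiF (F, G) k).1 (k+1) := by
  simp only [psiF]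
  rw [if_neg (by omega), if_pos (le_refl _)]
  have : F (k+2) ≤ F (k+1) := hF (by omega)
  omega

include hr2 in
lemma psi_detect : ∀ i, i < k → ¬ ((psiF (F, G) k).2 i < (psiF (F, G) k).1 (i+1)) := by
  intro i hi
  simp only [psiF]
  rw [if_pos (by omega), if_pos (by omega)]
  have := hr2 i hi
  omega

include hr2 in
lemma phi_psi_id : phiF (psiF (F, G) k) k = (F, G) := by
  simp only [phiF, psiF]
  apply Prod.ext
  · funext i
    simp only
    rcases le_or_gt i (k+1) with h | h
    · rw [if_pos h, if_pos h]
      omega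
    · rw [if_neg (by omega), if_neg (by omega : ¬ (i - 2 + 2 ≤ k + 1))]
      congr 1
      omega
  · funext i
    simp only
    rcases le_or_gt (i+2) (k+1) with h | h
    · rw [if_pos h, if_pos h]
      have := hGpos hr2 i (by omega)
      omega
    · rw [if_neg (by omega), if_neg (by omega : ¬ (i + 2 ≤ k + 1))]
      congr 1

end Psi


def Good (p : (ℕ → ℕ) × (ℕ → ℕ)) : Prop := ∀ i, p.1 (i + 1) ≤ p.2 i

lemma badEx {n : ℕ} (x : {p : (ℕ → ℕ) × (ℕ → ℕ) // Sprop n p ∧ ¬ Good p}) :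
    ∃ i, x.val.2 i < x.val.1 (i + 1) := by
  have := x.2.2
  unfold Good at this
  push_neg at this
  exact this

lemma crossEx {m : ℕ} (y : {p : (ℕ → ℕ) × (ℕ → ℕ) // Sprop m p}) :
    ∃ i, y.val.2 i ≤ y.val.1 (i + 1) + 1 := by
  obtain ⟨Ng, hNg⟩ := y.2.2.1.2
  exact ⟨Ng, by rw [hNg Ng (le_refl _)]; omega⟩

open Classical in
/-- The equivalence between violating pairs of size `n` and arbitrary pairs of
size `n - 2`. -/
noncomputable def badEquiv (n : ℕ) (hn : 2 ≤ n) :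
    {p : (ℕ → ℕ) × (ℕ → ℕ) // Sprop n p ∧ ¬ Good p} ≃
      {p : (ℕ → ℕ) × (ℕ → ℕ) // Sprop (n - 2) p} where
  toFun x := ⟨phiF x.val (Nat.find (badEx x)), by
    set k := Nat.find (badEx x) with hk
    have hf : Antitone x.val.1 := x.2.1.1.1
    have hg : Antitone x.val.2 := x.2.1.2.1.1
    obtain ⟨Nf, hNf⟩ := x.2.1.1.2
    obtain ⟨Ng, hNg⟩ := x.2.1.2.1.2
    have hv : x.val.2 k < x.val.1 (k+1) := by rw [hk]; exact Nat.find_spec (badEx x)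
    have hmin : ∀ i, i < k → x.val.1 (i+1) ≤ x.val.2 i := by
      intro i hi
      rw [hk] at hi
      have := Nat.find_min (badEx x) hi
      omega
    have hsum : (∑ᶠ i, x.val.1 i) + (∑ᶠ i, x.val.2 i) = n := x.2.1.2.2
    refine ⟨⟨?_, ⟨Ng + k + 3, ?_⟩⟩, ⟨?_, ⟨Nf + k + 3, ?_⟩⟩, ?_⟩
    · exact phi1_antitone hf hg hv
    · exact phi1_zero hNg
    · exact phi2_antitone hf hg hmin
    · exact phi2_zero hNf
    · have hs := phi_sum (f := x.val.1) (g := x.val.2) (k := k) hf hv hNf hNg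
      rw [Prod.mk.eta] at hs
      omega⟩
  invFun y := ⟨psiF y.val (Nat.find (crossEx y)), by
    set k := Nat.find (crossEx y) with hk
    have hF : Antitone y.val.1 := y.2.1.1
    have hG : Antitone y.val.2 := y.2.2.1.1
    obtain ⟨Nf, hNf⟩ := y.2.1.2
    obtain ⟨Ng, hNg⟩ := y.2.2.1.2
    have hr1 : y.val.2 k ≤ y.val.1 (k+1) + 1 := by rw [hk]; exact Nat.find_spec (crossEx y)
    have hr2 : ∀ i, i < k → y.val.1 (i+1) + 2 ≤ y.val.2 i := by
      intro i hi
      rw [hk] at hi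
      have := Nat.find_min (crossEx y) hi
      omega
    have hsum : (∑ᶠ i, y.val.1 i) + (∑ᶠ i, y.val.2 i) = n - 2 := y.2.2.2
    refine ⟨⟨⟨?_, ⟨Ng + k + 3, ?_⟩⟩, ⟨?_, ⟨Nf + k + 3, ?_⟩⟩, ?_⟩, ?_⟩
    · exact psi1_antitone hF hG hr1
    · exact psi1_zero hNg
    · exact psi2_antitone hF hG hr2
    · exact psi2_zero hNf
    · have hs := psi_sum (F := y.val.1) (G := y.val.2) (k := k) hr2 hNf hNg
      rw [Prod.mk.eta] at hs
      omega
    · unfold Good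
      push_neg
      refine ⟨k, ?_⟩
      have := psi_bad (F := y.val.1) (G := y.val.2) (k := k) hF
      rw [Prod.mk.eta] at this
      exact this⟩
  left_inv := by
    intro x
    apply Subtype.ext
    simp only
    set k := Nat.find (badEx x) with hk
    have hf : Antitone x.val.1 := x.2.1.1.1
    have hg : Antitone x.val.2 := x.2.1.2.1.1
    have hv : x.val.2 k < x.val.1 (k+1) := by rw [hk]; exact Nat.find_spec (badEx x)
    have hmin : ∀ i, i < k → x.val.1 (i+1) ≤ x.val.2 i := by
      intro i hi
      rw [hk] at hi
      have := Nat.find_min (badEx x) hi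
      omega
    have hdet := phi_detect (f := x.val.1) (g := x.val.2) (k := k) hf hv hmin
    rw [Prod.mk.eta] at hdet
    have hkey : ∀ (h2 : ∃ i, (phiF x.val k).2 i ≤ (phiF x.val k).1 (i+1) + 1),
        Nat.find h2 = k := by
      intro h2
      rw [Nat.find_eq_iff]
      exact ⟨hdet.1, fun i hi => hdet.2 i hi⟩
    rw [hkey]
    have h1 : phiF x.val k = phiF (x.val.1, x.val.2) k := by rw [Prod.mk.eta]
    rw [h1, psi_phi_id hf hv, Prod.mk.eta]
  right_inv := by
    intro y
    apply Subtype.ext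
    simp only
    set k := Nat.find (crossEx y) with hk
    have hF : Antitone y.val.1 := y.2.1.1
    have hG : Antitone y.val.2 := y.2.2.1.1
    have hr1 : y.val.2 k ≤ y.val.1 (k+1) + 1 := by rw [hk]; exact Nat.find_spec (crossEx y)
    have hr2 : ∀ i, i < k → y.val.1 (i+1) + 2 ≤ y.val.2 i := by
      intro i hi
      rw [hk] at hi
      have := Nat.find_min (crossEx y) hi
      omega
    have hb := psi_bad (F := y.val.1) (G := y.val.2) (k := k) hF
    have hd := psi_detect (F := y.val.1) (G := y.val.2) (k := k) hr2
    rw [Prod.mk.eta] at hb hd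
    have hkey : ∀ (h2 : ∃ i, (psiF y.val k).2 i < (psiF y.val k).1 (i+1)),
        Nat.find h2 = k := by
      intro h2
      rw [Nat.find_eq_iff]
      exact ⟨hb, fun i hi => hd i hi⟩
    rw [hkey]
    have h1 : psiF y.val k = psiF (y.val.1, y.val.2) k := by rw [Prod.mk.eta]
    rw [h1, phi_psi_id hr2, Prod.mk.eta]

/-- violating pairs need total at least 2 -/
lemma bad_two_le {n : ℕ} (p : (ℕ → ℕ) × (ℕ → ℕ)) (hS : Sprop n p) (hB : ¬ Good p) :
    2 ≤ n := by
  unfold Good at hB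
  push_neg at hB
  obtain ⟨i, hi⟩ := hB
  have hf : Antitone p.1 := hS.1.1
  obtain ⟨Nf, hNf⟩ := hS.1.2
  have h1 : ∀ j, j ≤ i + 1 → 1 ≤ p.1 j := fun j hj => le_trans (by omega) (hf hj)
  have h2 : i + 2 ≤ ∑ j ∈ Finset.range (i+2), p.1 j := by
    calc i + 2 = ∑ _j ∈ Finset.range (i+2), 1 := by simp
      _ ≤ _ := Finset.sum_le_sum (fun j hj => h1 j (by
          simp only [Finset.mem_range] at hj; omega))
  have h3 := partial_le_finsum p.1 hNf (i+2)
  have := hS.2.2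
  omega

open Classical in
lemma card_split (n : ℕ) :
    Nat.card {p : (ℕ → ℕ) × (ℕ → ℕ) // Sprop n p}
      = Nat.card {p : (ℕ → ℕ) × (ℕ → ℕ) // Sprop n p ∧ Good p}
        + Nat.card {p : (ℕ → ℕ) × (ℕ → ℕ) // Sprop n p ∧ ¬ Good p} := by
  haveI := finite_aux n Good
  haveI := finite_aux n (fun p => ¬ Good p)
  have e : {p : (ℕ → ℕ) × (ℕ → ℕ) // Sprop n p ∧ Good p}
      ⊕ {p : (ℕ → ℕ) × (ℕ → ℕ) // Sprop n p ∧ ¬ Good p}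
      ≃ {p : (ℕ → ℕ) × (ℕ → ℕ) // Sprop n p} := by
    refine Equiv.trans (Equiv.sumCongr ?_ ?_) (Equiv.sumCompl (fun x => Good x.val))
    · exact (Equiv.subtypeSubtypeEquivSubtypeInter _ _).symm
    · exact (Equiv.subtypeSubtypeEquivSubtypeInter _ _).symm
  rw [← Nat.card_congr e, Nat.card_sum]

end PP6

open PP6 in
/-- the number of pairs of partitions `(ν,μ)`,
`ν = (ν₀,ν₁,…)`, `μ = (μ₁,μ₂,…)` (here `p.1 i = νᵢ` and `p.2 i = μ_{i+1}`),
with `|ν| + |μ| = n` and `νᵢ ≤ μᵢ` for all `i ≥ 1`, equals `p₂(n) − p₂(n−2)`. -/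
theorem card_partition_pairs_nu_le_mu_shifted (n : ℕ) :
    Nat.card {p : (ℕ → ℕ) × (ℕ → ℕ) //
        IsPartitionFun p.1 ∧ IsPartitionFun p.2 ∧
        (∑ᶠ i, p.1 i) + (∑ᶠ i, p.2 i) = n ∧
        ∀ i, p.1 (i + 1) ≤ p.2 i} =
      numPartitionPairs n - (if 2 ≤ n then numPartitionPairs (n - 2) else 0) := by
  have hLHS : Nat.card {p : (ℕ → ℕ) × (ℕ → ℕ) //
      IsPartitionFun p.1 ∧ IsPartitionFun p.2 ∧
      (∑ᶠ i, p.1 i) + (∑ᶠ i, p.2 i) = n ∧ ∀ i, p.1 (i + 1) ≤ p.2 i}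
      = Nat.card {p : (ℕ → ℕ) × (ℕ → ℕ) // Sprop n p ∧ Good p} := by
    apply Nat.card_congr
    apply Equiv.subtypeEquivRight
    intro p
    unfold Sprop Good
    tauto
  have hN : numPartitionPairs n = Nat.card {p : (ℕ → ℕ) × (ℕ → ℕ) // Sprop n p} := rfl
  have hN2 : numPartitionPairs (n - 2)
      = Nat.card {p : (ℕ → ℕ) × (ℕ → ℕ) // Sprop (n - 2) p} := rfl
  have hsplit := card_split n
  by_cases hn : 2 ≤ n
  · rw [if_pos hn]
    have hbad : Nat.card {p : (ℕ → ℕ) × (ℕ → ℕ) // Sprop n p ∧ ¬ Good p}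
        = Nat.card {p : (ℕ → ℕ) × (ℕ → ℕ) // Sprop (n - 2) p} :=
      Nat.card_congr (badEquiv n hn)
    rw [hLHS, hN, hN2]
    omega
  · rw [if_neg hn]
    have hempty : Nat.card {p : (ℕ → ℕ) × (ℕ → ℕ) // Sprop n p ∧ ¬ Good p} = 0 := by
      have : IsEmpty {p : (ℕ → ℕ) × (ℕ → ℕ) // Sprop n p ∧ ¬ Good p} := by
        constructor
        intro x
        exact hn (bad_two_le x.val x.2.1 x.2.2)
      simp
    rw [hLHS, hN]
    omega
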